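/- The minimum of |z| over all complex roots z of the polynomial (q⁴ + 3q³ + 5q² + 3q + 1)(q⁶ + 2q⁵ + 3q⁴ + 5q³ + 3q² + 2q + 1)(q² − q + 1) equals (1 + √13 − √(2(√13 − 1)))/4; that is, this polynomial has a root of modulus (1 + √13 − √(2(√13 − 1)))/4 and every root has modulus at least this value. -/

import Mathlib

set_option maxHeartbeats 1000000

lemma quad_fac_quart (s u p c P C : ℝ) (hs : s^2 = 13) (hu : u^2 = 2*(s-1))
    (hp : p = (12 - (s-1)*u)/8) (hc : c = (6+2*s-u-s*u)/8)
    (hP : P = (12+(s-1)*u)/8) (hC : C = (6+2*s+u+s*u)/8) (z : ℂ) :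
    z^4 + 3*z^3 + 5*z^2 + 3*z + 1
      = (z^2 + (p:ℝ)*z + (c:ℝ)) * (z^2 + (P:ℝ)*z + (C:ℝ)) := by
  subst hp hc hP hC
  have hsC : (s:ℂ)^2 = 13 := by exact_mod_cast hs
  have huC : (u:ℂ)^2 = 2*((s:ℂ)-1) := by exact_mod_cast hu
  push_cast
  linear_combination ((u:ℂ)^2/64 + z*(u:ℂ)^2/32 - z^2/16 + z^2*(u:ℂ)^2/64) * hsC
    + (7/32 + (s:ℂ)/32 + 3*z/8 + 7*z^2/32 - z^2*(s:ℂ)/32) * huC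

lemma sext_fac (t : ℝ) (ht : t^3 + 2*t^2 + 1 = 0) (z : ℂ) :
    z^6 + 2*z^5 + 3*z^4 + 5*z^3 + 3*z^2 + 2*z + 1
      = (z^2 - (t:ℝ)*z + 1) * (z^4 + (2+(t:ℝ))*z^3 + ((t:ℝ)^2+2*(t:ℝ)+2)*z^2 + (2+(t:ℝ))*z + 1) := by
  have htC : (t:ℂ)^3 + 2*(t:ℂ)^2 + 1 = 0 := by exact_mod_cast ht
  linear_combination (z^3) * htC

lemma quad_norm_ge (p c m : ℝ) (hm : 0 ≤ m) (hd : p^2 < 4*c) (hmc : m^2 ≤ c)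
    (z : ℂ) (h : z^2 + (p:ℝ)*z + (c:ℝ) = 0) : m ≤ ‖z‖ := by
  have hre := congrArg Complex.re h
  have him := congrArg Complex.im h
  simp [pow_two, Complex.mul_re, Complex.mul_im, Complex.add_re, Complex.add_im] at hre him
  by_cases hzim : z.im = 0
  · exfalso
    rw [hzim] at hre
    nlinarith [sq_nonneg (2*z.re + p)]
  · have h2 : 2*z.re + p = 0 := by
      rcases mul_eq_zero.mp (show z.im * (2*z.re + p) = 0 by linear_combination him) with h | h
      · exact absurd h hzim
      · exact h
    have h3 : ‖z‖^2 = z.re^2 + z.im^2 := by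
      rw [Complex.sq_norm, Complex.normSq_apply]; ring
    have hn : ‖z‖^2 = c := by linear_combination h3 - hre + z.re * h2
    nlinarith [norm_nonneg z]

lemma quad_real_root (p c : ℝ) (hd : 4*c < p^2) (z : ℂ) (h : z^2 + (p:ℝ)*z + (c:ℝ) = 0) :
    z.im = 0 ∧ z.re^2 + p*z.re + c = 0 := by
  have hre := congrArg Complex.re h
  have him := congrArg Complex.im h
  simp [pow_two, Complex.mul_re, Complex.mul_im, Complex.add_re, Complex.add_im] at hre him
  rcases mul_eq_zero.mp (show z.im * (2*z.re + p) = 0 by linear_combination him) with h1 | h2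
  · refine ⟨h1, ?_⟩
    rw [h1] at hre
    nlinarith
  · exfalso
    nlinarith [sq_nonneg z.im]

lemma sextic_norm_ge (r : ℝ) (hr0 : 0 ≤ r) (hr6 : r ≤ 0.581) (z : ℂ)
    (h6 : z^6 + 2*z^5 + 3*z^4 + 5*z^3 + 3*z^2 + 2*z + 1 = 0) : r ≤ ‖z‖ := by
  have hivt := intermediate_value_Icc (by norm_num : (-2.206:ℝ) ≤ -2.205)
    ((by fun_prop : Continuous (fun x : ℝ => x^3 + 2*x^2 + 1)).continuousOn)
  have h0mem : (0:ℝ) ∈ Set.Icc ((-2.206:ℝ)^3 + 2*(-2.206)^2 + 1)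
      ((-2.205:ℝ)^3 + 2*(-2.205)^2 + 1) := by
    constructor <;> norm_num
  obtain ⟨t, htmem, ht⟩ := hivt h0mem
  obtain ⟨ht1, ht2⟩ := htmem
  rw [sext_fac t ht] at h6
  rcases mul_eq_zero.mp h6 with h | h
  · -- quadratic with real roots
    have h' : z^2 + ((-t : ℝ):ℂ)*z + ((1:ℝ):ℂ) = 0 := by
      push_cast
      linear_combination h
    obtain ⟨him0, hre0⟩ := quad_real_root (-t) 1 (by nlinarith) z h'
    have ha : z.re ≤ -0.6 := by
      nlinarith [sq_nonneg (z.re + 0.6), sq_nonneg (z.re + 1.6), sq_nonneg z.re]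
    calc r ≤ 0.6 := by linarith
      _ ≤ -z.re := by linarith
      _ ≤ |z.re| := neg_le_abs _
      _ ≤ ‖z‖ := Complex.abs_re_le_norm z
      _ = ‖z‖ := rfl
  · -- palindromic quartic factor: no roots of norm < 0.581
    by_contra hcon
    push_neg at hcon
    have hz6 : ‖z‖ < 0.581 := lt_of_lt_of_le hcon hr6
    have hz0 : z ≠ 0 := by
      intro h0
      rw [h0] at h
      norm_num at h
    have hzn0 : 0 < ‖z‖ := norm_pos_iff.mpr hz0
    set w : ℂ := z + z⁻¹ with hw_def
    have hw : w^2 + (2+(t:ℂ))*w + ((t:ℂ)^2+2*(t:ℂ)) = 0 := by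
      have hkey : z^2 * (w^2 + (2+(t:ℂ))*w + ((t:ℂ)^2+2*(t:ℂ)))
          = z^4 + (2+(t:ℂ))*z^3 + ((t:ℂ)^2+2*(t:ℂ)+2)*z^2 + (2+(t:ℂ))*z + 1 := by
        rw [hw_def]
        field_simp
        ring
      exact (mul_eq_zero.mp (hkey.trans h)).resolve_left (pow_ne_zero 2 hz0)
    have n1 : ‖(2+(t:ℂ))‖ ≤ 0.206 := by
      rw [show (2+(t:ℂ)) = ((2+t : ℝ) : ℂ) by push_cast; ring, Complex.norm_real,
        Real.norm_eq_abs, abs_le]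
      constructor <;> linarith
    have n2 : ‖((t:ℂ)^2+2*(t:ℂ))‖ ≤ 0.46 := by
      rw [show ((t:ℂ)^2+2*(t:ℂ)) = ((t^2+2*t : ℝ) : ℂ) by push_cast; ring, Complex.norm_real,
        Real.norm_eq_abs, abs_le]
      constructor
      · nlinarith [sq_nonneg (t + 2.205)]
      · nlinarith [mul_nonneg (by linarith : (0:ℝ) ≤ t + 2.206) (by linarith : (0:ℝ) ≤ -(t + 2.205))]
    have hWlb : 1/0.581 - 0.581 ≤ ‖w‖ := by
      have h1 : ‖z⁻¹‖ ≤ ‖w‖ + ‖z‖ := by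
        calc ‖z⁻¹‖ = ‖w - z‖ := by rw [hw_def]; congr 1; ring
          _ ≤ ‖w‖ + ‖z‖ := norm_sub_le _ _
      rw [norm_inv] at h1
      have h2 : 1/(0.581:ℝ) < (‖z‖)⁻¹ := by
        rw [one_div]
        exact inv_strictAnti₀ hzn0 hz6
      linarith
    have hWsq : ‖w‖^2 ≤ 0.206*‖w‖ + 0.46 := by
      have e2 : w^2 = -((2+(t:ℂ))*w + ((t:ℂ)^2+2*(t:ℂ))) := by linear_combination hw
      calc ‖w‖^2 = ‖w^2‖ := (norm_pow w 2).symm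
        _ = ‖(2+(t:ℂ))*w + ((t:ℂ)^2+2*(t:ℂ))‖ := by rw [e2, norm_neg]
        _ ≤ ‖(2+(t:ℂ))*w‖ + ‖((t:ℂ)^2+2*(t:ℂ))‖ := norm_add_le _ _
        _ = ‖(2+(t:ℂ))‖*‖w‖ + ‖((t:ℂ)^2+2*(t:ℂ))‖ := by rw [norm_mul]
        _ ≤ 0.206*‖w‖ + 0.46 := by
            have := norm_nonneg w
            nlinarith
    nlinarith [hWlb, hWsq, norm_nonneg w]

lemma lower_bound_aux (r b c B C : ℝ) (hr0 : 0 ≤ r) (hr6 : r ≤ 0.581)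
    (hbc : b^2 < 4*c) (hcr : r^2 ≤ c) (hBC : B^2 < 4*C) (hrC : r^2 ≤ C)
    (hfac : ∀ w : ℂ, w^4 + 3*w^3 + 5*w^2 + 3*w + 1
      = (w^2 + (b:ℝ)*w + (c:ℝ)) * (w^2 + (B:ℝ)*w + (C:ℝ)))
    (z : ℂ)
    (hz : (z ^ 4 + 3 * z ^ 3 + 5 * z ^ 2 + 3 * z + 1) *
        (z ^ 6 + 2 * z ^ 5 + 3 * z ^ 4 + 5 * z ^ 3 + 3 * z ^ 2 + 2 * z + 1) *
        (z ^ 2 - z + 1) = 0) : r ≤ ‖z‖ := by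
  rcases mul_eq_zero.mp hz with h46 | h3
  · rcases mul_eq_zero.mp h46 with h4 | h6
    · rw [hfac z] at h4
      rcases mul_eq_zero.mp h4 with h | h
      · exact quad_norm_ge b c r hr0 hbc hcr z h
      · exact quad_norm_ge B C r hr0 hBC hrC z h
    · exact sextic_norm_ge r hr0 hr6 z h6
  · have hcube : z^3 = -1 := by linear_combination (z+1)*h3
    have hn3 : ‖z‖^3 = 1 := by rw [← norm_pow, hcube]; simp
    have h1 : (1:ℝ) ≤ ‖z‖ := by
      nlinarith [norm_nonneg z, sq_nonneg (‖z‖ + 1/2), sq_nonneg (‖z‖ - 1)]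
    linarith

theorem bronze_ratio_min_root_modulus :
    (∃ z : ℂ,
      (z ^ 4 + 3 * z ^ 3 + 5 * z ^ 2 + 3 * z + 1) *
        (z ^ 6 + 2 * z ^ 5 + 3 * z ^ 4 + 5 * z ^ 3 + 3 * z ^ 2 + 2 * z + 1) *
        (z ^ 2 - z + 1) = 0 ∧
      ‖z‖ = (1 + Real.sqrt 13 - Real.sqrt (2 * (Real.sqrt 13 - 1))) / 4) ∧
    ∀ z : ℂ,
      (z ^ 4 + 3 * z ^ 3 + 5 * z ^ 2 + 3 * z + 1) *
        (z ^ 6 + 2 * z ^ 5 + 3 * z ^ 4 + 5 * z ^ 3 + 3 * z ^ 2 + 2 * z + 1) *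
        (z ^ 2 - z + 1) = 0 →
      (1 + Real.sqrt 13 - Real.sqrt (2 * (Real.sqrt 13 - 1))) / 4 ≤ ‖z‖ := by
  set s : ℝ := Real.sqrt 13 with hs_def
  have hs : s ^ 2 = 13 := Real.sq_sqrt (by norm_num)
  have hs_lb : 3.605 < s := by
    rw [hs_def]
    exact (Real.lt_sqrt (by norm_num)).mpr (by norm_num)
  have hs_ub : s < 3.606 := by
    rw [hs_def]
    exact (Real.sqrt_lt' (by norm_num)).mpr (by norm_num)
  set u : ℝ := Real.sqrt (2 * (s - 1)) with hu_def
  have hu : u ^ 2 = 2 * (s - 1) := Real.sq_sqrt (by linarith)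
  have hu_lb : 2.2825 < u := by
    rw [hu_def]
    exact (Real.lt_sqrt (by norm_num)).mpr (by nlinarith)
  have hu_ub : u < 2.2832 := by
    rw [hu_def]
    exact (Real.sqrt_lt' (by norm_num)).mpr (by nlinarith)
  set r : ℝ := (1 + s - u) / 4 with hr_def
  have hr_lb : 0.58 < r := by rw [hr_def]; linarith
  have hr_ub : r < 0.581 := by rw [hr_def]; linarith
  have hr0 : 0 ≤ r := by linarith
  -- product bounds
  have hsu_lb : 8.228 < s * u := by
    calc (8.228:ℝ) < 3.605 * 2.2825 := by norm_num
      _ < s * u := mul_lt_mul'' hs_lb hu_lb (by norm_num) (by norm_num)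
  have hsu_ub : s * u < 8.234 := by
    calc s * u < 3.606 * 2.2832 := mul_lt_mul'' hs_ub hu_ub (by linarith) (by linarith)
      _ < 8.234 := by norm_num
  have hs1u_lb : 5.945 < (s - 1) * u := by
    calc (5.945:ℝ) < 2.605 * 2.2825 := by norm_num
      _ < (s - 1) * u := mul_lt_mul'' (by linarith) hu_lb (by norm_num) (by norm_num)
  have hs1u_ub : (s - 1) * u < 5.952 := by
    calc (s - 1) * u < 2.606 * 2.2832 := mul_lt_mul'' (by linarith) hu_ub (by linarith) (by linarith)
      _ < 5.952 := by norm_num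
  -- coefficients
  set b : ℝ := (12 - (s-1)*u)/8 with hb_def
  set c : ℝ := (6+2*s-u-s*u)/8 with hc_def
  set B : ℝ := (12+(s-1)*u)/8 with hB_def
  set C : ℝ := (6+2*s+u+s*u)/8 with hC_def
  have hb_lb : 0.756 < b := by rw [hb_def]; linarith
  have hb_ub : b < 0.757 := by rw [hb_def]; linarith
  have hc_lb : 0.336 < c := by rw [hc_def]; linarith
  have hB_lb : 2.243 < B := by rw [hB_def]; linarith
  have hB_ub : B < 2.244 := by rw [hB_def]; linarith
  have hC_lb : 2.96 < C := by rw [hC_def]; linarith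
  have hbc : b^2 < 4*c := by
    calc b^2 < 0.757^2 := pow_lt_pow_left₀ hb_ub (by linarith) (by norm_num)
      _ < 4 * 0.336 := by norm_num
      _ < 4 * c := by linarith
  have hBC : B^2 < 4*C := by
    calc B^2 < 2.244^2 := pow_lt_pow_left₀ hB_ub (by linarith) (by norm_num)
      _ < 4 * 2.96 := by norm_num
      _ < 4 * C := by linarith
  have hcr : c = r^2 := by
    rw [hc_def, hr_def]
    linear_combination (-(1:ℝ)/16) * hs + (-(1:ℝ)/16) * hu
  have hrC : r^2 ≤ C := by
    have : r^2 < 0.581^2 := pow_lt_pow_left₀ hr_ub hr0 (by norm_num)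
    calc r^2 ≤ 0.581^2 := le_of_lt this
      _ ≤ 2.96 := by norm_num
      _ ≤ C := le_of_lt hC_lb
  have hfac : ∀ w : ℂ, w^4 + 3*w^3 + 5*w^2 + 3*w + 1
      = (w^2 + (b:ℝ)*w + (c:ℝ)) * (w^2 + (B:ℝ)*w + (C:ℝ)) :=
    fun w => quad_fac_quart s u b c B C hs hu hb_def hc_def hB_def hC_def w
  constructor
  · -- existence
    have hdpos : 0 ≤ c - b^2/4 := by linarith
    set d : ℝ := Real.sqrt (c - b^2/4) with hd_def
    have hd2 : d^2 = c - b^2/4 := Real.sq_sqrt hdpos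
    refine ⟨⟨-b/2, d⟩, ?_, ?_⟩
    · have hz1 : (⟨-b/2, d⟩ : ℂ)^2 + (b:ℝ)*(⟨-b/2, d⟩ : ℂ) + (c:ℝ) = 0 := by
        apply Complex.ext
        · simp [pow_two, Complex.mul_re, Complex.mul_im, Complex.add_re, Complex.add_im]
          linear_combination -hd2
        · simp [pow_two, Complex.mul_re, Complex.mul_im, Complex.add_re, Complex.add_im]
          ring
      have hq : (⟨-b/2, d⟩ : ℂ)^4 + 3*(⟨-b/2, d⟩ : ℂ)^3 + 5*(⟨-b/2, d⟩ : ℂ)^2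
          + 3*(⟨-b/2, d⟩ : ℂ) + 1 = 0 := by
        rw [hfac, hz1, zero_mul]
      rw [hq, zero_mul, zero_mul]
    · have hnorm : ‖(⟨-b/2, d⟩ : ℂ)‖ = Real.sqrt ((-b/2)*(-b/2) + d*d) := by
        rw [Complex.norm_def, Complex.normSq_mk]
      rw [hnorm, show (-b/2)*(-b/2) + d*d = r^2 by linear_combination hd2 + hcr,
        Real.sqrt_sq hr0]
  · -- lower bound
    intro z hz
    exact lower_bound_aux r b c B C hr0 (by linarith) hbc (le_of_eq hcr.symm) hBC hrC hfac z hz
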